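/- If the weak mixing of a measure-preserving system (F, Leb) on [0,1]^d holds (d = 2 or 3) and the phase space has Euclidean diameter √d, then Lebesgue-almost every pair of points (x,y) ∈ [0,1]^d × [0,1]^d is a Li–Yorke pair: liminf_n dist(F^n x, F^n y) = 0 and limsup_n dist(F^n x, F^n y) = √d. -/

import Mathlib

open MeasureTheory Filter

/-- Ergodic recurrence: almost every point visits a set of positive measure
infinitely often. -/
lemma erg_freq {α : Type*} [MeasurableSpace α] {T : α → α} {ν : Measure α}
    [IsProbabilityMeasure ν] (hT : Ergodic T ν) {A : Set α} (hA : MeasurableSet A)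
    (h0 : ν A ≠ 0) : ∀ᵐ x ∂ν, ∃ᶠ n in atTop, T^[n] x ∈ A := by
  have hcons : MeasureTheory.Conservative T ν := hT.toMeasurePreserving.conservative
  set W : Set α := {x | ∃ᶠ n in atTop, T^[n] x ∈ A} with hW
  have hWeq : W = ⋂ N : ℕ, ⋃ n : ℕ, ⋃ _ : N ≤ n, T^[n] ⁻¹' A := by
    ext x
    simp [hW, frequently_atTop, Set.mem_iInter, Set.mem_iUnion]
  have hWm : MeasurableSet W := by
    rw [hWeq]
    exact MeasurableSet.iInter fun N => MeasurableSet.iUnion fun n =>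
      MeasurableSet.iUnion fun _ => (hT.measurable.iterate n) hA
  have hinv : T ⁻¹' W = W := by
    ext x
    simp only [Set.mem_preimage, hW, Set.mem_setOf_eq]
    constructor
    · intro h
      rw [frequently_atTop] at h ⊢
      intro a
      obtain ⟨b, hb, hbA⟩ := h a
      exact ⟨b + 1, le_trans hb (Nat.le_succ b), by
        rwa [Function.iterate_succ_apply] ⟩
    · intro h
      rw [frequently_atTop] at h ⊢
      intro a
      obtain ⟨b, hb, hbA⟩ := h (a + 1)
      refine ⟨b - 1, by omega, ?_⟩
      rw [← Function.iterate_succ_apply]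
      have hb1 : (b - 1).succ = b := by omega
      rw [hb1]; exact hbA
  rcases hT.toPreErgodic.measure_self_or_compl_eq_zero hWm hinv with h | h
  · exfalso
    have hsub : ∀ᵐ x ∂ν, x ∈ A → x ∈ W :=
      hcons.ae_mem_imp_frequently_image_mem hA.nullMeasurableSet
    have hAW : ν (A \ W) = 0 := by
      rw [MeasureTheory.ae_iff] at hsub
      exact measure_mono_null
        (fun x hx => by simp only [Set.mem_setOf_eq]; push_neg; exact ⟨hx.1, hx.2⟩) hsub
    have hle : ν A ≤ ν W + ν (A \ W) := by
      calc ν A ≤ ν (W ∪ (A \ W)) := measure_mono (fun x hx => by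
            by_cases hxW : x ∈ W
            · exact Or.inl hxW
            · exact Or.inr ⟨hx, hxW⟩)
        _ ≤ ν W + ν (A \ W) := measure_union_le _ _
    rw [h, hAW] at hle
    simpa using h0 (le_antisymm (by simpa using hle) zero_le)
  · exact (MeasureTheory.measure_eq_zero_iff_ae_notMem.mp h).mono fun x hx => not_not.mp hx

/-- The volume of an axis-parallel cube in `EuclideanSpace ℝ (Fin d)`. -/
lemma vol_box (d : ℕ) (a b : ℝ) :
    (volume : Measure (EuclideanSpace ℝ (Fin d))) {x | ∀ i, x i ∈ Set.Icc a b}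
      = (ENNReal.ofReal (b - a)) ^ d := by
  have h := (EuclideanSpace.volume_preserving_symm_measurableEquiv_toLp (Fin d)).measure_preimage
    (s := Set.pi Set.univ fun _ : Fin d => Set.Icc a b)
    (MeasurableSet.univ_pi fun _ => measurableSet_Icc).nullMeasurableSet
  have heq : ((MeasurableEquiv.toLp 2 (Fin d → ℝ)).symm) ⁻¹'
      (Set.pi Set.univ fun _ : Fin d => Set.Icc a b) = {x | ∀ i, x i ∈ Set.Icc a b} := by
    ext x
    constructor
    · intro hx i
      exact hx i (Set.mem_univ i)
    · intro hx i _
      exact hx i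
  rw [heq] at h
  rw [h, volume_pi_pi]
  simp [Real.volume_Icc]

/-- Boxes are measurable. -/
lemma box_measurable (d : ℕ) (a b : ℝ) :
    MeasurableSet {x : EuclideanSpace ℝ (Fin d) | ∀ i, x i ∈ Set.Icc a b} := by
  have heq : {x : EuclideanSpace ℝ (Fin d) | ∀ i, x i ∈ Set.Icc a b}
      = ((MeasurableEquiv.toLp 2 (Fin d → ℝ)).symm) ⁻¹'
        (Set.pi Set.univ fun _ : Fin d => Set.Icc a b) := by
    ext x
    constructor
    · intro hx i _
      exact hx i
    · intro hx i
      exact hx i (Set.mem_univ i)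
  rw [heq]
  exact ((MeasurableEquiv.toLp 2 (Fin d → ℝ)).symm).measurable
    (MeasurableSet.univ_pi fun _ => measurableSet_Icc)

set_option maxHeartbeats 1600000 in
/-- if `F` preserves Lebesgue measure on the unit cube `[0,1]^d`
(`d = 2` or `3`) and `(F, Leb)` is weak mixing (i.e. the product system is ergodic),
then Lebesgue-a.e. pair of points is a Li–Yorke pair:
`liminf dist(Fⁿx, Fⁿy) = 0` and `limsup dist(Fⁿx, Fⁿy) = √d`. -/
theorem ae_pair_liYorke (d : ℕ) (hd : d = 2 ∨ d = 3)
    (F : EuclideanSpace ℝ (Fin d) → EuclideanSpace ℝ (Fin d))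
    (μ : Measure (EuclideanSpace ℝ (Fin d)))
    (hμ : μ = (volume : Measure (EuclideanSpace ℝ (Fin d))).restrict
      {x | ∀ i, x i ∈ Set.Icc (0 : ℝ) 1})
    [IsProbabilityMeasure μ]
    (hpres : MeasurePreserving F μ μ)
    (hwm : Ergodic (fun p : EuclideanSpace ℝ (Fin d) × EuclideanSpace ℝ (Fin d) =>
      (F p.1, F p.2)) (μ.prod μ)) :
    ∀ᵐ p ∂(μ.prod μ),
      p.1 ≠ p.2 ∧
      Filter.liminf (fun n : ℕ => dist (F^[n] p.1) (F^[n] p.2)) atTop = 0 ∧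
      Filter.limsup (fun n : ℕ => dist (F^[n] p.1) (F^[n] p.2)) atTop = Real.sqrt d := by
  set K : Set (EuclideanSpace ℝ (Fin d)) := {x | ∀ i, x i ∈ Set.Icc (0 : ℝ) 1} with hK
  set T : EuclideanSpace ℝ (Fin d) × EuclideanSpace ℝ (Fin d) → EuclideanSpace ℝ (Fin d) × EuclideanSpace ℝ (Fin d) := fun p => (F p.1, F p.2) with hT
  set ν : Measure (EuclideanSpace ℝ (Fin d) × EuclideanSpace ℝ (Fin d)) := μ.prod μ with hν
  have hd1 : 1 ≤ d := by rcases hd with h | h <;> omega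
  have hdpos : (0 : ℝ) < d := by
    have : 0 < d := by omega
    exact_mod_cast this
  have hsqrt_pos : 0 < Real.sqrt d := Real.sqrt_pos.mpr hdpos
  -- iterates of T
  have hIt : ∀ (n : ℕ) (p : (EuclideanSpace ℝ (Fin d)) × (EuclideanSpace ℝ (Fin d))), T^[n] p = (F^[n] p.1, F^[n] p.2) := by
    intro n
    induction n with
    | zero => intro p; simp
    | succ n ih =>
      intro p
      rw [Function.iterate_succ_apply, Function.iterate_succ_apply,
        Function.iterate_succ_apply, ih]
  -- K is measurable
  have hKm : MeasurableSet K := box_measurable d 0 1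
  -- almost every point is in K
  have hμKc : μ Kᶜ = 0 := by
    rw [hμ, Measure.restrict_apply hKm.compl]
    simp
  -- the diagonal is null
  haveI : Nonempty (Fin d) := ⟨⟨0, by omega⟩⟩
  haveI : Nontrivial (EuclideanSpace ℝ (Fin d)) := by
    have : Nontrivial (Fin d → ℝ) := by infer_instance
    exact (EuclideanSpace.equiv (Fin d) ℝ).toEquiv.nontrivial
  have hdiagm : MeasurableSet {p : (EuclideanSpace ℝ (Fin d)) × (EuclideanSpace ℝ (Fin d)) | p.1 = p.2} :=
    (isClosed_eq continuous_fst continuous_snd).measurableSet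
  have hdiag : ν {p : (EuclideanSpace ℝ (Fin d)) × (EuclideanSpace ℝ (Fin d)) | p.1 = p.2} = 0 := by
    rw [hν, Measure.prod_apply hdiagm]
    have hz : ∀ x : EuclideanSpace ℝ (Fin d), μ (Prod.mk x ⁻¹' {p : (EuclideanSpace ℝ (Fin d)) × (EuclideanSpace ℝ (Fin d)) | p.1 = p.2}) = 0 := by
      intro x
      have h1 : (Prod.mk x ⁻¹' {p : (EuclideanSpace ℝ (Fin d)) × (EuclideanSpace ℝ (Fin d)) | p.1 = p.2}) = {x} := by
        ext y; simp [eq_comm]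
      rw [h1]
      refine le_antisymm ?_ zero_le
      calc μ {x} ≤ volume {x} := by rw [hμ]; exact Measure.restrict_le_self _
        _ = 0 := measure_singleton x
    rw [lintegral_congr hz]
    simp
  -- measure of boxes
  have hbox_mu : ∀ a b : ℝ, 0 ≤ a → b ≤ 1 →
      μ {x : EuclideanSpace ℝ (Fin d) | ∀ i, x i ∈ Set.Icc a b} = (ENNReal.ofReal (b - a)) ^ d := by
    intro a b ha hb
    have hsub : {x : EuclideanSpace ℝ (Fin d) | ∀ i, x i ∈ Set.Icc a b} ⊆ K := by
      intro x hx i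
      obtain ⟨h1, h2⟩ := hx i
      exact ⟨le_trans ha h1, le_trans h2 hb⟩
    rw [hμ, Measure.restrict_apply (box_measurable d a b),
      Set.inter_eq_self_of_subset_left hsub]
    exact vol_box d a b
  -- distance bounds
  have hdist_le : ∀ x y : EuclideanSpace ℝ (Fin d), x ∈ K → y ∈ K → dist x y ≤ Real.sqrt d := by
    intro x y hx hy
    rw [EuclideanSpace.dist_eq]
    have hle : ∑ i, dist (x i) (y i) ^ 2 ≤ (d : ℝ) := by
      calc ∑ i, dist (x i) (y i) ^ 2 ≤ ∑ _i : Fin d, (1 : ℝ) := by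
            refine Finset.sum_le_sum fun i _ => ?_
            have h1 : dist (x i) (y i) ≤ 1 := by
              rw [Real.dist_eq]
              obtain ⟨hx1, hx2⟩ := hx i
              obtain ⟨hy1, hy2⟩ := hy i
              rw [abs_le]; constructor <;> linarith
            calc dist (x i) (y i) ^ 2 ≤ 1 ^ 2 := by
                  exact pow_le_pow_left₀ dist_nonneg h1 2
              _ = 1 := one_pow 2
        _ = (d : ℝ) := by simp
    exact Real.sqrt_le_sqrt hle
  -- a.e. all iterates stay in K × K
  have hGm : MeasurableSet {p : (EuclideanSpace ℝ (Fin d)) × (EuclideanSpace ℝ (Fin d)) | p.1 ∈ K ∧ p.2 ∈ K} :=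
    (hKm.preimage measurable_fst).inter (hKm.preimage measurable_snd)
  have hGc : ν {p : (EuclideanSpace ℝ (Fin d)) × (EuclideanSpace ℝ (Fin d)) | p.1 ∈ K ∧ p.2 ∈ K}ᶜ = 0 := by
    have hsub : {p : (EuclideanSpace ℝ (Fin d)) × (EuclideanSpace ℝ (Fin d)) | p.1 ∈ K ∧ p.2 ∈ K}ᶜ ⊆ (Kᶜ ×ˢ (Set.univ : Set (EuclideanSpace ℝ (Fin d)))) ∪
        ((Set.univ : Set (EuclideanSpace ℝ (Fin d))) ×ˢ Kᶜ) := by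
      intro p hp
      simp only [Set.mem_compl_iff, Set.mem_setOf_eq, not_and_or] at hp
      rcases hp with h | h
      · exact Or.inl ⟨h, Set.mem_univ _⟩
      · exact Or.inr ⟨Set.mem_univ _, h⟩
    refine measure_mono_null hsub ?_
    refine le_antisymm ?_ zero_le
    calc ν (Kᶜ ×ˢ (Set.univ : Set (EuclideanSpace ℝ (Fin d))) ∪ (Set.univ : Set (EuclideanSpace ℝ (Fin d))) ×ˢ Kᶜ)
        ≤ ν (Kᶜ ×ˢ (Set.univ : Set (EuclideanSpace ℝ (Fin d)))) + ν ((Set.univ : Set (EuclideanSpace ℝ (Fin d))) ×ˢ Kᶜ) :=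
          measure_union_le _ _
      _ = 0 := by rw [hν, Measure.prod_prod, Measure.prod_prod, hμKc]; simp
  have hbox : ∀ᵐ p ∂ν, ∀ n : ℕ, F^[n] p.1 ∈ K ∧ F^[n] p.2 ∈ K := by
    rw [MeasureTheory.ae_all_iff]
    intro n
    have hpre : ν (T^[n] ⁻¹' {p : (EuclideanSpace ℝ (Fin d)) × (EuclideanSpace ℝ (Fin d)) | p.1 ∈ K ∧ p.2 ∈ K}ᶜ) = 0 := by
      have := (hwm.toMeasurePreserving.iterate n).measure_preimage
        hGm.compl.nullMeasurableSet
      rw [this]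
      exact hGc
    have heq : {p : (EuclideanSpace ℝ (Fin d)) × (EuclideanSpace ℝ (Fin d)) | ¬ (F^[n] p.1 ∈ K ∧ F^[n] p.2 ∈ K)}
        = T^[n] ⁻¹' {p : (EuclideanSpace ℝ (Fin d)) × (EuclideanSpace ℝ (Fin d)) | p.1 ∈ K ∧ p.2 ∈ K}ᶜ := by
      ext p
      simp [Set.mem_preimage, hIt n p]
    rw [MeasureTheory.ae_iff]
    rw [show {a : (EuclideanSpace ℝ (Fin d)) × (EuclideanSpace ℝ (Fin d)) | ¬((F^[n] a.1) ∈ K ∧ (F^[n] a.2) ∈ K)}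
      = {p : (EuclideanSpace ℝ (Fin d)) × (EuclideanSpace ℝ (Fin d)) | ¬ (F^[n] p.1 ∈ K ∧ F^[n] p.2 ∈ K)} from rfl, heq]
    exact hpre
  -- small distance sets have positive measure
  have hsmall : ∀ k : ℕ, ∀ᵐ p ∂ν, ∃ᶠ n in atTop,
      dist (F^[n] p.1) (F^[n] p.2) < 1 / (k + 1 : ℝ) := by
    intro k
    set ε : ℝ := 1 / (k + 1 : ℝ) with hε
    have hεpos : 0 < ε := by positivity
    set δ : ℝ := min 1 (ε / (Real.sqrt d + 1)) with hδ
    have hδpos : 0 < δ := lt_min one_pos (by positivity)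
    have hδ1 : δ ≤ 1 := min_le_left _ _
    have hδ2 : δ ≤ ε / (Real.sqrt d + 1) := min_le_right _ _
    set A : Set ((EuclideanSpace ℝ (Fin d)) × (EuclideanSpace ℝ (Fin d))) := {p | dist p.1 p.2 < ε} with hA
    have hAm : MeasurableSet A :=
      (isOpen_lt (continuous_dist.comp (continuous_fst.prodMk continuous_snd))
        continuous_const).measurableSet
    have hApos : ν A ≠ 0 := by
      have hsub : ({x : EuclideanSpace ℝ (Fin d) | ∀ i, x i ∈ Set.Icc 0 δ} ×ˢ {x : EuclideanSpace ℝ (Fin d) | ∀ i, x i ∈ Set.Icc 0 δ}) ⊆ A := by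
        rintro ⟨x, y⟩ ⟨hx, hy⟩
        simp only [hA, Set.mem_setOf_eq]
        have hle : dist x y ≤ Real.sqrt d * δ := by
          rw [EuclideanSpace.dist_eq]
          have hsum : ∑ i, dist (x i) (y i) ^ 2 ≤ (d : ℝ) * δ ^ 2 := by
            calc ∑ i, dist (x i) (y i) ^ 2 ≤ ∑ _i : Fin d, δ ^ 2 := by
                  refine Finset.sum_le_sum fun i _ => ?_
                  have h1 : dist (x i) (y i) ≤ δ := by
                    rw [Real.dist_eq]
                    obtain ⟨hx1, hx2⟩ := hx i
                    obtain ⟨hy1, hy2⟩ := hy i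
                    rw [abs_le]; constructor <;> linarith
                  exact pow_le_pow_left₀ dist_nonneg h1 2
              _ = (d : ℝ) * δ ^ 2 := by simp [mul_comm]
          calc Real.sqrt (∑ i, dist (x i) (y i) ^ 2) ≤ Real.sqrt ((d : ℝ) * δ ^ 2) :=
                Real.sqrt_le_sqrt hsum
            _ = Real.sqrt d * δ := by
                rw [Real.sqrt_mul (le_of_lt hdpos), Real.sqrt_sq hδpos.le]
        have hlt : Real.sqrt d * δ < ε := by
          have h2 : Real.sqrt d * δ ≤ Real.sqrt d * (ε / (Real.sqrt d + 1)) :=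
            mul_le_mul_of_nonneg_left hδ2 hsqrt_pos.le
          have h3 : Real.sqrt d * (ε / (Real.sqrt d + 1)) < ε := by
            rw [mul_div_assoc']
            rw [div_lt_iff₀ (by positivity)]
            nlinarith [hsqrt_pos]
          linarith
        linarith
      have hν0 : ν ({x : EuclideanSpace ℝ (Fin d) | ∀ i, x i ∈ Set.Icc 0 δ} ×ˢ {x : EuclideanSpace ℝ (Fin d) | ∀ i, x i ∈ Set.Icc 0 δ}) ≠ 0 := by
        rw [hν, Measure.prod_prod, hbox_mu 0 δ le_rfl hδ1]
        simp only [sub_zero]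
        have hne0 : ENNReal.ofReal δ ≠ 0 := by
          simp [ENNReal.ofReal_eq_zero, not_le, hδpos]
        exact mul_ne_zero (pow_ne_zero _ hne0) (pow_ne_zero _ hne0)
      intro h
      exact hν0 (measure_mono_null hsub h)
    have := erg_freq hwm hAm hApos
    refine this.mono fun p hp => ?_
    refine hp.mono fun n hn => ?_
    have := hIt n p
    rw [this] at hn
    exact hn
  -- large distance sets have positive measure
  have hbig : ∀ k : ℕ, ∀ᵐ p ∂ν, ∃ᶠ n in atTop,
      Real.sqrt d - 1 / (k + 1 : ℝ) < dist (F^[n] p.1) (F^[n] p.2) := by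
    intro k
    set ε : ℝ := 1 / (k + 1 : ℝ) with hε
    have hεpos : 0 < ε := by positivity
    set δ : ℝ := min (1/2) (ε / (2 * Real.sqrt d + 1)) with hδ
    have hδpos : 0 < δ := lt_min (by norm_num) (by positivity)
    have hδhalf : δ ≤ 1/2 := min_le_left _ _
    have hδ2 : δ ≤ ε / (2 * Real.sqrt d + 1) := min_le_right _ _
    set B : Set ((EuclideanSpace ℝ (Fin d)) × (EuclideanSpace ℝ (Fin d))) := {p | Real.sqrt d - ε < dist p.1 p.2} with hB
    have hBm : MeasurableSet B :=
      (isOpen_lt continuous_const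
        (continuous_dist.comp (continuous_fst.prodMk continuous_snd))).measurableSet
    have hBpos : ν B ≠ 0 := by
      have hsub : ({x : EuclideanSpace ℝ (Fin d) | ∀ i, x i ∈ Set.Icc 0 δ} ×ˢ
          {x : EuclideanSpace ℝ (Fin d) | ∀ i, x i ∈ Set.Icc (1 - δ) 1}) ⊆ B := by
        rintro ⟨x, y⟩ ⟨hx, hy⟩
        simp only [hB, Set.mem_setOf_eq]
        have hge : Real.sqrt d * (1 - 2 * δ) ≤ dist x y := by
          rw [EuclideanSpace.dist_eq]
          have hsum : (d : ℝ) * (1 - 2 * δ) ^ 2 ≤ ∑ i, dist (x i) (y i) ^ 2 := by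
            calc (d : ℝ) * (1 - 2 * δ) ^ 2 = ∑ _i : Fin d, (1 - 2 * δ) ^ 2 := by
                  simp [mul_comm]
              _ ≤ ∑ i, dist (x i) (y i) ^ 2 := by
                  refine Finset.sum_le_sum fun i _ => ?_
                  have h1 : 1 - 2 * δ ≤ dist (x i) (y i) := by
                    rw [Real.dist_eq]
                    obtain ⟨hx1, hx2⟩ := hx i
                    obtain ⟨hy1, hy2⟩ := hy i
                    have : 1 - 2 * δ ≤ |x i - y i| := by
                      rw [abs_sub_comm]
                      calc 1 - 2 * δ ≤ y i - x i := by linarith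
                        _ ≤ |y i - x i| := le_abs_self _
                    exact this
                  have h2 : (0:ℝ) ≤ 1 - 2 * δ := by linarith
                  nlinarith [dist_nonneg (x := x i) (y := y i)]
          calc Real.sqrt d * (1 - 2 * δ) = Real.sqrt ((d : ℝ) * (1 - 2 * δ) ^ 2) := by
                rw [Real.sqrt_mul (le_of_lt hdpos), Real.sqrt_sq (by linarith)]
            _ ≤ Real.sqrt (∑ i, dist (x i) (y i) ^ 2) := Real.sqrt_le_sqrt hsum
        have hlt : Real.sqrt d - ε < Real.sqrt d * (1 - 2 * δ) := by
          have h2 : 2 * Real.sqrt d * δ ≤ 2 * Real.sqrt d * (ε / (2 * Real.sqrt d + 1)) :=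
            mul_le_mul_of_nonneg_left hδ2 (by positivity)
          have h3 : 2 * Real.sqrt d * (ε / (2 * Real.sqrt d + 1)) < ε := by
            rw [mul_div_assoc']
            rw [div_lt_iff₀ (by positivity)]
            nlinarith [hsqrt_pos]
          nlinarith
        linarith
      have hν0 : ν ({x : EuclideanSpace ℝ (Fin d) | ∀ i, x i ∈ Set.Icc 0 δ} ×ˢ
          {x : EuclideanSpace ℝ (Fin d) | ∀ i, x i ∈ Set.Icc (1 - δ) 1}) ≠ 0 := by
        rw [hν, Measure.prod_prod, hbox_mu 0 δ le_rfl (by linarith),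
          hbox_mu (1 - δ) 1 (by linarith) le_rfl]
        simp only [sub_zero, sub_sub_cancel]
        have hne0 : ENNReal.ofReal δ ≠ 0 := by
          simp [ENNReal.ofReal_eq_zero, not_le, hδpos]
        exact mul_ne_zero (pow_ne_zero _ hne0) (pow_ne_zero _ hne0)
      intro h
      exact hν0 (measure_mono_null hsub h)
    have := erg_freq hwm hBm hBpos
    refine this.mono fun p hp => ?_
    refine hp.mono fun n hn => ?_
    have := hIt n p
    rw [this] at hn
    exact hn
  -- combine everything
  have hsmall' : ∀ᵐ p ∂ν, ∀ k : ℕ, ∃ᶠ n in atTop,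
      dist (F^[n] p.1) (F^[n] p.2) < 1 / (k + 1 : ℝ) := (MeasureTheory.ae_all_iff).mpr hsmall
  have hbig' : ∀ᵐ p ∂ν, ∀ k : ℕ, ∃ᶠ n in atTop,
      Real.sqrt d - 1 / (k + 1 : ℝ) < dist (F^[n] p.1) (F^[n] p.2) :=
    (MeasureTheory.ae_all_iff).mpr hbig
  have hne : ∀ᵐ p ∂ν, p.1 ≠ p.2 := by
    rw [MeasureTheory.ae_iff]
    simpa using hdiag
  filter_upwards [hne, hbox, hsmall', hbig'] with p hpne hpK hps hpb
  set u : ℕ → ℝ := fun n => dist (F^[n] p.1) (F^[n] p.2) with hu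
  have hub : ∀ n, u n ≤ Real.sqrt d := fun n => hdist_le _ _ (hpK n).1 (hpK n).2
  have hlb : ∀ n, 0 ≤ u n := fun n => dist_nonneg
  have hbdd_below : IsBoundedUnder (· ≥ ·) atTop u := isBoundedUnder_of ⟨0, hlb⟩
  have hbdd_above : IsBoundedUnder (· ≤ ·) atTop u := isBoundedUnder_of ⟨Real.sqrt d, hub⟩
  refine ⟨hpne, ?_, ?_⟩
  · -- liminf = 0
    have h1 : ∀ k : ℕ, liminf u atTop ≤ 1 / (k + 1 : ℝ) := fun k =>
      liminf_le_of_frequently_le ((hps k).mono fun n h => h.le) hbdd_below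
    have h0le : 0 ≤ liminf u atTop :=
      le_liminf_of_le hbdd_above.isCoboundedUnder_ge (Eventually.of_forall hlb)
    refine le_antisymm ?_ h0le
    by_contra h
    push_neg at h
    obtain ⟨k, hk⟩ := exists_nat_one_div_lt h
    exact absurd (h1 k) (not_le.mpr hk)
  · -- limsup = √d
    have hle : limsup u atTop ≤ Real.sqrt d :=
      limsup_le_of_le hbdd_below.isCoboundedUnder_le (Eventually.of_forall hub)
    refine le_antisymm hle ?_
    by_contra h
    push_neg at h
    obtain ⟨k, hk⟩ := exists_nat_one_div_lt (sub_pos.mpr h)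
    have h2 : Real.sqrt d - 1 / (k + 1 : ℝ) ≤ limsup u atTop :=
      le_limsup_of_frequently_le ((hpb k).mono fun n hn => hn.le) hbdd_above
    linarith
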